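/- Let 1/2 < θ ≤ 1 and suppose there is a constant C such that for every positive integer q, every integer c coprime to q, and every real N ≥ q^θ, the congruence x·y ≡ c (mod q) has a solution with C·N ≤ x, y ≤ 2·C·N and gcd(x,y) = 1. Then for every real α, every N ≥ 1, and every rational approximation |α - a/q| ≤ 1/(q·N^{1/θ}) with gcd(a,q) = 1 and N < q ≤ N^{1/θ}, there exist integers a₁, a₂ and integers q₁, q₂ with C·N ≤ q₁, q₂ ≤ 2·C·N such that |α - a₁/q₁ - a₂/q₂| ≤ (1 + 1/C²)/(q·N^{1/θ}). -/

import Mathlib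

theorem stmt_4 (θ : ℝ) (hθ1 : 1 / 2 < θ) (hθ2 : θ ≤ 1) (C : ℝ) (hC : 0 < C)
    (H : ∀ q : ℕ, 0 < q → ∀ c : ℤ, IsCoprime c (q : ℤ) → ∀ N : ℝ, (q : ℝ) ^ θ ≤ N →
      ∃ x y : ℤ, C * N ≤ (x : ℝ) ∧ (x : ℝ) ≤ 2 * C * N ∧ C * N ≤ (y : ℝ) ∧
        (y : ℝ) ≤ 2 * C * N ∧ IsCoprime x y ∧ x * y ≡ c [ZMOD (q : ℤ)]) :
    ∀ α : ℝ, ∀ N : ℝ, 1 ≤ N → ∀ a : ℤ, ∀ q : ℕ, 0 < q → IsCoprime a (q : ℤ) →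
    (N : ℝ) < q → (q : ℝ) ≤ N ^ (1 / θ) → |α - (a : ℝ) / q| ≤ 1 / (q * N ^ (1 / θ)) →
    ∃ (a₁ a₂ q₁ q₂ : ℤ), C * N ≤ (q₁ : ℝ) ∧ (q₁ : ℝ) ≤ 2 * C * N ∧
      C * N ≤ (q₂ : ℝ) ∧ (q₂ : ℝ) ≤ 2 * C * N ∧
      |α - (a₁ : ℝ) / q₁ - a₂ / q₂| ≤ (1 + 1 / C ^ 2) / (q * N ^ (1 / θ)) := by
  intro α N hN a q hq hcop hq1 hq2 happ
  have hθ0 : 0 < θ := by linarith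
  have hN0 : (0:ℝ) < N := by linarith
  have hq0 : (0:ℝ) < (q:ℝ) := by exact_mod_cast hq
  -- q^θ ≤ N
  have hqθ : (q:ℝ) ^ θ ≤ N := by
    calc (q:ℝ) ^ θ ≤ (N ^ (1/θ)) ^ θ :=
          Real.rpow_le_rpow hq0.le hq2 hθ0.le
      _ = N := by
          rw [← Real.rpow_mul hN0.le, one_div, inv_mul_cancel₀ hθ0.ne', Real.rpow_one]
  obtain ⟨u, v, huv⟩ := hcop
  have hcu : IsCoprime u (q:ℤ) := ⟨a, v, by linarith [huv]⟩
  obtain ⟨x, y, hx1, hx2, hy1, hy2, hxy, hmod⟩ := H q hq u hcu N hqθ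
  have hCN : (0:ℝ) < C * N := mul_pos hC hN0
  have hx0 : (0:ℝ) < (x:ℝ) := lt_of_lt_of_le hCN hx1
  have hy0 : (0:ℝ) < (y:ℝ) := lt_of_lt_of_le hCN hy1
  -- a*x*y ≡ 1 (mod q)
  obtain ⟨m, hm⟩ : (q:ℤ) ∣ x*y - u := hmod.symm.dvd
  obtain ⟨k, hk⟩ : ∃ k : ℤ, a * (x*y) - 1 = (q:ℤ) * k :=
    ⟨a*m - v, by linear_combination a*hm + huv⟩
  obtain ⟨s, t, hst⟩ := hxy
  refine ⟨k * t, k * s, x, y, hx1, hx2, hy1, hy2, ?_⟩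
  set M : ℝ := N ^ (1/θ) with hM
  have hM0 : 0 < M := Real.rpow_pos_of_pos hN0 _
  -- key algebraic identity
  have hk' : (a:ℝ) * (x*y) - 1 = (q:ℝ) * k := by exact_mod_cast hk
  have hst' : (s:ℝ)*x + (t:ℝ)*y = 1 := by exact_mod_cast hst
  have e1 : ((k*t : ℤ):ℝ)/x + ((k*s : ℤ):ℝ)/y = (k:ℝ)/((x:ℝ)*y) := by
    push_cast
    field_simp
    linear_combination (k:ℝ) * hst'
  have e2 : (a:ℝ)/q - (k:ℝ)/((x:ℝ)*y) = 1/((q:ℝ)*x*y) := by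
    field_simp
    linear_combination hk'
  have key : α - ((k*t : ℤ):ℝ)/x - ((k*s : ℤ):ℝ)/y = (α - (a:ℝ)/q) + 1/((q:ℝ)*x*y) := by
    linarith [e1, e2]
  rw [key]
  have h1 : |(α - (a:ℝ)/q) + 1/((q:ℝ)*x*y)| ≤ |α - (a:ℝ)/q| + 1/((q:ℝ)*x*y) := by
    have := abs_add_le (α - (a:ℝ)/q) (1/((q:ℝ)*x*y))
    have hpos : 0 < 1/((q:ℝ)*x*y) := by positivity
    calc _ ≤ |α - (a:ℝ)/q| + |1/((q:ℝ)*x*y)| := this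
      _ = _ := by rw [abs_of_pos hpos]
  -- bound 1/(q*x*y)
  have hMN2 : M ≤ N^2 := by
    have h2 : (1:ℝ)/θ ≤ 2 := by
      rw [div_le_iff₀ hθ0]; linarith
    calc M = N ^ (1/θ) := rfl
      _ ≤ N ^ (2:ℝ) := Real.rpow_le_rpow_of_exponent_le hN h2
      _ = N^2 := by rw [← Real.rpow_natCast N 2]; norm_num
  have hxyM : C^2 * M ≤ (x:ℝ)*y := by
    calc C^2 * M ≤ C^2 * N^2 := by nlinarith
      _ = (C*N)*(C*N) := by ring
      _ ≤ (x:ℝ)*y := mul_le_mul hx1 hy1 hCN.le hx0.le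
  have hineq : 1/((q:ℝ)*x*y) ≤ (1/C^2) / ((q:ℝ)*M) := by
    rw [div_le_div_iff₀ (by positivity) (by positivity)]
    calc 1 * ((q:ℝ)*M) = (q:ℝ)*M := by ring
      _ ≤ (1/C^2) * ((q:ℝ) * (x*y)) := by
          rw [one_div, ← mul_assoc, mul_comm ((C^2)⁻¹) (q:ℝ), mul_assoc]
          have : M ≤ (C^2)⁻¹ * ((x:ℝ)*y) := by
            rw [le_inv_mul_iff₀ (by positivity)]
            linarith [hxyM]
          exact mul_le_mul_of_nonneg_left this hq0.le
      _ = (1/C^2) * ((q:ℝ)*x*y) := by ring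
  calc |(α - (a:ℝ)/q) + 1/((q:ℝ)*x*y)| ≤ |α - (a:ℝ)/q| + 1/((q:ℝ)*x*y) := h1
    _ ≤ 1/((q:ℝ)*M) + (1/C^2)/((q:ℝ)*M) := add_le_add happ hineq
    _ = (1 + 1/C^2) / ((q:ℝ)*M) := by ring
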